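/- Given a continuous Γ : J → M_n(ℝ), there exists exactly one two-parameter family H : J × J → GL(n,ℝ), differentiable in each argument, satisfying H(t,r) = H(t,s)H(s,r), H(s,s) = I, and ∂H(s,t)/∂t|_{t=s} = Γ(s) for all r,s,t ∈ J. -/

import Mathlib

open Matrix

open Set Filter Topology
open scoped NNReal


section Helpers
variable {E : Type*} [NormedAddCommGroup E] [NormedSpace ℝ E]

lemma myHasDerivWithinAt_singleton (f : ℝ → E) (x : ℝ) (d : E) :
    HasDerivWithinAt f d {x} x := by
  rw [hasDerivWithinAt_iff_hasFDerivWithinAt]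
  simp only [HasFDerivWithinAt, nhdsWithin_singleton, hasFDerivAtFilter_iff_isLittleO,
    Asymptotics.isLittleO_pure, sub_self]
  simp

lemma glueODE (v : ℝ → E → E) {f₁ f₂ : ℝ → E} {a c b : ℝ} (hac : a ≤ c) (hcb : c ≤ b)
    (h₁ : ∀ u ∈ Icc a c, HasDerivWithinAt f₁ (v u (f₁ u)) (Icc a c) u)
    (h₂ : ∀ u ∈ Icc c b, HasDerivWithinAt f₂ (v u (f₂ u)) (Icc c b) u)
    (heq : f₁ c = f₂ c) :
    ∃ f : ℝ → E, (∀ u ∈ Icc a c, f u = f₁ u) ∧ (∀ u ∈ Icc c b, f u = f₂ u) ∧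
      ∀ u ∈ Icc a b, HasDerivWithinAt f (v u (f u)) (Icc a b) u := by
  classical
  set f : ℝ → E := fun u => if u ≤ c then f₁ u else f₂ u with hf
  have he1 : ∀ u ∈ Icc a c, f u = f₁ u := fun u hu => if_pos hu.2
  have he2 : ∀ u ∈ Icc c b, f u = f₂ u := by
    intro u hu
    by_cases h : u ≤ c
    · have : u = c := le_antisymm h hu.1
      simp [hf, this, heq]
    · exact if_neg h
  refine ⟨f, he1, he2, ?_⟩
  intro u hu
  rcases lt_trichotomy u c with hlt | heqc | hgt
  · have humem : u ∈ Icc a c := ⟨hu.1, hlt.le⟩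
    have hmem : Icc a c ∈ 𝓝[Icc a b] u := by
      rw [mem_nhdsWithin]
      exact ⟨Iio c, isOpen_Iio, hlt, fun y hy => ⟨hy.2.1, hy.1.le⟩⟩
    rw [he1 u humem]
    exact ((h₁ u humem).mono_of_mem_nhdsWithin hmem).congr_of_eventuallyEq
      (by filter_upwards [hmem] with y hy using (he1 y hy)) (he1 u humem)
  · subst heqc
    have d1 : HasDerivWithinAt f (v u (f u)) (Icc a u) u := by
      rw [he1 u ⟨hu.1, le_rfl⟩]
      exact (h₁ u ⟨hu.1, le_rfl⟩).congr (fun y hy => he1 y hy) (he1 u ⟨hu.1, le_rfl⟩)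
    have d2 : HasDerivWithinAt f (v u (f u)) (Icc u b) u := by
      rw [he2 u ⟨le_rfl, hu.2⟩]
      exact (h₂ u ⟨le_rfl, hu.2⟩).congr (fun y hy => he2 y hy) (he2 u ⟨le_rfl, hu.2⟩)
    have := d1.union d2
    rwa [Icc_union_Icc_eq_Icc hu.1 hu.2] at this
  · have humem : u ∈ Icc c b := ⟨hgt.le, hu.2⟩
    have hmem : Icc c b ∈ 𝓝[Icc a b] u := by
      rw [mem_nhdsWithin]
      exact ⟨Ioi c, isOpen_Ioi, hgt, fun y hy => ⟨hy.1.le, hy.2.2⟩⟩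
    rw [he2 u humem]
    exact ((h₂ u humem).mono_of_mem_nhdsWithin hmem).congr_of_eventuallyEq
      (by filter_upwards [hmem] with y hy using (he2 y hy)) (he2 u humem)
end Helpers

section Helpers2
variable {E : Type*} [NormedAddCommGroup E] [NormedSpace ℝ E] [CompleteSpace E]
variable {v : ℝ → E → E} {K : ℝ≥0}

lemma stepODE (hK : 1 ≤ (K : ℝ)) (hlip : ∀ t, LipschitzWith K (v t))
    (hcont : ∀ x, Continuous fun t => v t x) (h0 : ∀ t, v t 0 = 0)
    {c d : ℝ} (hcd : c ≤ d) (hlen : d - c ≤ 1 / (2 * K)) (x₀ : E) :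
    ∃ f : ℝ → E, f c = x₀ ∧ ∀ u ∈ Icc c d, HasDerivWithinAt f (v u (f u)) (Icc c d) u := by
  have hKpos : (0:ℝ) < K := lt_of_lt_of_le one_pos hK
  have hb : ∀ t x, ‖v t x‖ ≤ K * ‖x‖ := by
    intro t x
    have := (hlip t).dist_le_mul x 0
    simpa [dist_eq_norm, h0 t] using this
  have hpl : IsPicardLindelof v (tmin := c) (tmax := d) ⟨c, le_rfl, hcd⟩ x₀
      ⟨‖x₀‖ + 1, by positivity⟩ 0 ⟨(K:ℝ) * (2 * ‖x₀‖ + 2), by positivity⟩ K := by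
    constructor
    · exact fun t _ => (hlip t).lipschitzOnWith
    · exact fun x _ => (hcont x).continuousOn
    · intro t _ x hx
      show ‖v t x‖ ≤ (K:ℝ) * (2 * ‖x₀‖ + 2)
      have hxx : ‖x‖ ≤ 2 * ‖x₀‖ + 1 := by
        have := (mem_closedBall_iff_norm.mp hx : ‖x - x₀‖ ≤ ‖x₀‖ + 1)
        have h2 : ‖x‖ ≤ ‖x - x₀‖ + ‖x₀‖ := by
          have := norm_add_le (x - x₀) x₀
          simpa using this
        nlinarith [norm_nonneg x₀]
      calc ‖v t x‖ ≤ K * ‖x‖ := hb t x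
        _ ≤ (K:ℝ) * (2 * ‖x₀‖ + 2) := by nlinarith
    · show (K:ℝ) * (2 * ‖x₀‖ + 2) * max (d - c) (c - c) ≤ ‖x₀‖ + 1 - ((0:ℝ≥0):ℝ)
      rw [NNReal.coe_zero, sub_zero]
      have : max (d - c) (c - c) ≤ 1 / (2 * K) := by
        simp only [sub_self]
        exact max_le hlen (by positivity)
      calc (K:ℝ) * (2 * ‖x₀‖ + 2) * max (d - c) (c - c)
          ≤ (K:ℝ) * (2 * ‖x₀‖ + 2) * (1 / (2 * K)) := by
            apply mul_le_mul_of_nonneg_left this (by positivity)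
        _ = ‖x₀‖ + 1 := by field_simp
  obtain ⟨f, hf0, hf⟩ := hpl.exists_eq_forall_mem_Icc_hasDerivWithinAt₀
  exact ⟨f, hf0, hf⟩

lemma fwdODE (hK : 1 ≤ (K : ℝ)) (hlip : ∀ t, LipschitzWith K (v t))
    (hcont : ∀ x, Continuous fun t => v t x) (h0 : ∀ t, v t 0 = 0)
    {a B : ℝ} (haB : a ≤ B) (x₀ : E) :
    ∃ f : ℝ → E, f a = x₀ ∧ ∀ u ∈ Icc a B, HasDerivWithinAt f (v u (f u)) (Icc a B) u := by
  have hKpos : (0:ℝ) < K := lt_of_lt_of_le one_pos hK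
  set δ : ℝ := 1 / (2 * K) with hδ
  have hδpos : 0 < δ := by positivity
  -- induction: solutions on k steps from any c
  have main : ∀ k : ℕ, ∀ c ∈ Icc a B, ∀ x₀ : E,
      ∃ f : ℝ → E, f c = x₀ ∧ ∀ u ∈ Icc c (min B (c + k * δ)),
        HasDerivWithinAt f (v u (f u)) (Icc c (min B (c + k * δ))) u := by
    intro k
    induction k with
    | zero =>
      intro c hc x₀
      refine ⟨fun _ => x₀, rfl, ?_⟩
      have : min B (c + (0:ℕ) * δ) = c := by
        simp [min_eq_right hc.2]
      rw [this]
      intro u hu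
      have hu' : u = c := le_antisymm (by simpa using hu.2) hu.1
      subst hu'
      rw [Icc_self]
      exact myHasDerivWithinAt_singleton _ _ _
    | succ k ih =>
      intro c hc x₀
      set d : ℝ := min B (c + δ) with hd
      have hcd : c ≤ d := le_min hc.2 (by linarith)
      have hdB : d ∈ Icc a B := ⟨le_trans hc.1 hcd, min_le_left _ _⟩
      have hdc : d - c ≤ 1 / (2 * K) := by
        have h1 : d ≤ c + δ := min_le_right _ _
        rw [← hδ]
        linarith
      obtain ⟨f₁, hf₁0, hf₁⟩ := stepODE hK hlip hcont h0 hcd hdc x₀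
      obtain ⟨f₂, hf₂0, hf₂⟩ := ih d hdB (f₁ d)
      have hkey : min B (d + k * δ) = min B (c + (k + 1 : ℕ) * δ) := by
        rcases le_or_gt (c + δ) B with h | h
        · have : d = c + δ := min_eq_right h
          rw [this]
          push_cast
          ring_nf
        · have hdB' : d = B := min_eq_left h.le
          rw [hdB']
          have h1 : min B (B + k * δ) = B :=
            min_eq_left (le_add_of_nonneg_right (mul_nonneg (Nat.cast_nonneg _) hδpos.le))
          have h2 : min B (c + (k+1:ℕ) * δ) = B := min_eq_left (by push_cast; nlinarith [Nat.cast_nonneg (α := ℝ) k])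
          rw [h1, h2]
      rw [hkey] at hf₂
      have hdle : d ≤ min B (c + (k + 1 : ℕ) * δ) := by
        rcases le_or_gt (c + δ) B with h | h
        · have : d = c + δ := min_eq_right h
          rw [this]
          refine le_min h ?_
          push_cast
          nlinarith [Nat.cast_nonneg (α := ℝ) k]
        · have : d = B := min_eq_left h.le
          rw [this]
          refine le_min le_rfl ?_
          push_cast
          nlinarith [Nat.cast_nonneg (α := ℝ) k]
      obtain ⟨f, hfe1, hfe2, hf⟩ := glueODE v hcd hdle hf₁
        (fun u hu => hf₂ u hu) (by rw [hf₂0])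
      exact ⟨f, by rw [hfe1 c ⟨le_rfl, hcd⟩, hf₁0], hf⟩
  obtain ⟨k, hk⟩ := exists_nat_ge ((B - a) / δ)
  obtain ⟨f, hf0, hf⟩ := main k a ⟨le_rfl, haB⟩ x₀
  have : min B (a + k * δ) = B := by
    rw [div_le_iff₀ hδpos] at hk
    refine min_eq_left (by linarith)
  rw [this] at hf
  exact ⟨f, hf0, hf⟩
end Helpers2
section Helpers3
variable {E : Type*} [NormedAddCommGroup E] [NormedSpace ℝ E] [CompleteSpace E]
variable {v : ℝ → E → E} {K : ℝ≥0}

lemma bwdODE (hK : 1 ≤ (K : ℝ)) (hlip : ∀ t, LipschitzWith K (v t))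
    (hcont : ∀ x, Continuous fun t => v t x) (h0 : ∀ t, v t 0 = 0)
    {A s : ℝ} (hAs : A ≤ s) (x₀ : E) :
    ∃ f : ℝ → E, f s = x₀ ∧ ∀ u ∈ Set.Icc A s, HasDerivWithinAt f (v u (f u)) (Set.Icc A s) u := by
  set w : ℝ → E → E := fun t x => -(v (-t) x) with hw
  have hwlip : ∀ t, LipschitzWith K (w t) := by
    intro t
    refine LipschitzWith.of_dist_le_mul fun x y => ?_
    rw [hw]
    simp only
    rw [dist_neg_neg]
    exact (hlip (-t)).dist_le_mul x y
  have hwcont : ∀ x, Continuous fun t => w t x := fun x =>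
    ((hcont x).comp continuous_neg).neg
  have hw0 : ∀ t, w t 0 = 0 := fun t => by simp [hw, h0]
  obtain ⟨g, hg0, hg⟩ := fwdODE hK hwlip hwcont hw0 (neg_le_neg hAs) x₀
  refine ⟨fun t => g (-t), by simpa using hg0, ?_⟩
  intro u hu
  have hmem : -u ∈ Set.Icc (-s) (-A) := ⟨neg_le_neg hu.2, neg_le_neg hu.1⟩
  have hgd := hg (-u) hmem
  have hmaps : Set.MapsTo Neg.neg (Set.Icc A s) (Set.Icc (-s) (-A)) :=
    fun y hy => ⟨neg_le_neg hy.2, neg_le_neg hy.1⟩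
  have := HasDerivWithinAt.scomp (g₁ := g) (h := fun t : ℝ => -t) u hgd
    ((hasDerivAt_neg u).hasDerivWithinAt) hmaps
  simp only [hw, neg_neg] at this
  simpa [Function.comp_def] using this

lemma aroundODE (hK : 1 ≤ (K : ℝ)) (hlip : ∀ t, LipschitzWith K (v t))
    (hcont : ∀ x, Continuous fun t => v t x) (h0 : ∀ t, v t 0 = 0)
    {A B s : ℝ} (hs : s ∈ Set.Icc A B) (x₀ : E) :
    ∃ f : ℝ → E, f s = x₀ ∧ ∀ u ∈ Set.Icc A B, HasDerivWithinAt f (v u (f u)) (Set.Icc A B) u := by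
  obtain ⟨f₁, hf₁0, hf₁⟩ := bwdODE hK hlip hcont h0 hs.1 x₀
  obtain ⟨f₂, hf₂0, hf₂⟩ := fwdODE hK hlip hcont h0 hs.2 x₀
  obtain ⟨f, he1, he2, hf⟩ := glueODE v hs.1 hs.2 hf₁ hf₂ (by rw [hf₁0, hf₂0])
  exact ⟨f, by rw [he1 s ⟨hs.1, le_rfl⟩, hf₁0], hf⟩

lemma uniqODE_right (hlip : ∀ t, LipschitzWith K (v t)) {f g : ℝ → E} {p q : ℝ}
    (hf : ∀ u ∈ Set.Icc p q, HasDerivWithinAt f (v u (f u)) (Set.Icc p q) u)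
    (hg : ∀ u ∈ Set.Icc p q, HasDerivWithinAt g (v u (g u)) (Set.Icc p q) u)
    (h : f p = g p) : ∀ u ∈ Set.Icc p q, f u = g u := by
  have hv : ∀ t, LipschitzOnWith K (v t) (Set.univ : Set E) :=
    fun t => (hlip t).lipschitzOnWith
  have key : ∀ x ∈ Set.Ico p q, ∀ (F : ℝ → E),
      (∀ u ∈ Set.Icc p q, HasDerivWithinAt F (v u (F u)) (Set.Icc p q) u) →
      HasDerivWithinAt F (v x (F x)) (Set.Ici x) x := by
    intro x hx F hF
    refine (hF x ⟨hx.1, hx.2.le⟩).mono_of_mem_nhdsWithin ?_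
    rw [mem_nhdsWithin]
    exact ⟨Set.Iio q, isOpen_Iio, hx.2, fun y hy => ⟨le_trans hx.1 hy.2, hy.1.le⟩⟩
  exact fun u hu => ODE_solution_unique_of_mem_Icc_right (fun t _ => hv t)
    (fun x hx => (hf x hx).continuousWithinAt)
    (fun x hx => key x hx f hf) (fun _ _ => Set.mem_univ _)
    (fun x hx => (hg x hx).continuousWithinAt)
    (fun x hx => key x hx g hg) (fun _ _ => Set.mem_univ _) h hu

lemma uniqODE_left (hlip : ∀ t, LipschitzWith K (v t)) {f g : ℝ → E} {p q : ℝ}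
    (hf : ∀ u ∈ Set.Icc p q, HasDerivWithinAt f (v u (f u)) (Set.Icc p q) u)
    (hg : ∀ u ∈ Set.Icc p q, HasDerivWithinAt g (v u (g u)) (Set.Icc p q) u)
    (h : f q = g q) : ∀ u ∈ Set.Icc p q, f u = g u := by
  have hv : ∀ t, LipschitzOnWith K (v t) (Set.univ : Set E) :=
    fun t => (hlip t).lipschitzOnWith
  have key : ∀ x ∈ Set.Ioc p q, ∀ (F : ℝ → E),
      (∀ u ∈ Set.Icc p q, HasDerivWithinAt F (v u (F u)) (Set.Icc p q) u) →
      HasDerivWithinAt F (v x (F x)) (Set.Iic x) x := by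
    intro x hx F hF
    refine (hF x ⟨hx.1.le, hx.2⟩).mono_of_mem_nhdsWithin ?_
    rw [mem_nhdsWithin]
    exact ⟨Set.Ioi p, isOpen_Ioi, hx.1, fun y hy => ⟨hy.1.le, le_trans hy.2 hx.2⟩⟩
  exact fun u hu => ODE_solution_unique_of_mem_Icc_left (fun t _ => hv t)
    (fun x hx => (hf x hx).continuousWithinAt)
    (fun x hx => key x hx f hf) (fun _ _ => Set.mem_univ _)
    (fun x hx => (hg x hx).continuousWithinAt)
    (fun x hx => key x hx g hg) (fun _ _ => Set.mem_univ _) h hu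
end Helpers3
section MatHelpers
open Matrix
variable {n : ℕ}

lemma hasDerivAt_pi2 {f : ℝ → (Fin n → Fin n → ℝ)} {f' : Fin n → Fin n → ℝ} {x : ℝ} :
    HasDerivAt f f' x ↔ ∀ i j, HasDerivAt (fun t => f t i j) (f' i j) x := by
  rw [hasDerivAt_pi]
  exact forall_congr' fun i => hasDerivAt_pi

lemma pi2_entry_le (x : Fin n → Fin n → ℝ) (i j : Fin n) : |x i j| ≤ ‖x‖ := by
  have h1 : ‖x i j‖ ≤ ‖x i‖ := norm_le_pi_norm (x i) j
  have h2 : ‖x i‖ ≤ ‖x‖ := norm_le_pi_norm x i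
  rw [Real.norm_eq_abs] at h1
  linarith

lemma pi2_norm_le {x : Fin n → Fin n → ℝ} {C : ℝ} (hC : 0 ≤ C)
    (h : ∀ i j, |x i j| ≤ C) : ‖x‖ ≤ C := by
  refine (pi_norm_le_iff_of_nonneg hC).2 fun i => (pi_norm_le_iff_of_nonneg hC).2 fun j => ?_
  rw [Real.norm_eq_abs]
  exact h i j

lemma enlarge_Icc {J : Set ℝ} (hJ : IsOpen J) {p q : ℝ} (hpq : p ≤ q)
    (h : Set.Icc p q ⊆ J) : ∃ ε > 0, Set.Icc (p - ε) (q + ε) ⊆ J := by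
  obtain ⟨ε₁, h1pos, h1⟩ := Metric.isOpen_iff.1 hJ p (h ⟨le_rfl, hpq⟩)
  obtain ⟨ε₂, h2pos, h2⟩ := Metric.isOpen_iff.1 hJ q (h ⟨hpq, le_rfl⟩)
  refine ⟨min ε₁ ε₂ / 2, by positivity, fun x hx => ?_⟩
  rcases lt_or_ge x p with hxp | hxp
  · apply h1
    rw [Metric.mem_ball, Real.dist_eq, abs_of_neg (by linarith)]
    have := hx.1
    have hm : min ε₁ ε₂ ≤ ε₁ := min_le_left _ _
    linarith
  · rcases le_or_gt x q with hxq | hxq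
    · exact h ⟨hxp, hxq⟩
    · apply h2
      rw [Metric.mem_ball, Real.dist_eq, abs_of_pos (by linarith)]
      have := hx.2
      have hm : min ε₁ ε₂ ≤ ε₂ := min_le_right _ _
      linarith

/-- The clamped linear vector field for the matrix ODE `M' = M * Γ`. -/
lemma clamped_field (Γ : ℝ → Matrix (Fin n) (Fin n) ℝ) {J : Set ℝ}
    (hΓ : ∀ i j, ContinuousOn (fun s => Γ s i j) J)
    {A B : ℝ} (hAB : A ≤ B) (hJ' : Set.Icc A B ⊆ J) :
    ∃ (v : ℝ → (Fin n → Fin n → ℝ) → (Fin n → Fin n → ℝ)) (K : ℝ≥0),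
      1 ≤ (K : ℝ) ∧ (∀ t, LipschitzWith K (v t)) ∧ (∀ x, Continuous fun t => v t x) ∧
      (∀ t, v t 0 = 0) ∧
      (∀ u ∈ Set.Icc A B, ∀ x : Fin n → Fin n → ℝ,
        v u x = fun i j => ∑ k, x i k * Γ u k j) := by
  classical
  set cl : ℝ → ℝ := fun t => max A (min B t) with hcl
  have hclmem : ∀ t, cl t ∈ Set.Icc A B := fun t =>
    ⟨le_max_left _ _, max_le hAB (min_le_left _ _)⟩
  have hclid : ∀ u ∈ Set.Icc A B, cl u = u := by
    intro u hu
    rw [hcl]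
    simp only
    rw [min_eq_right hu.2, max_eq_right hu.1]
  have hclcont : Continuous cl := continuous_const.max (continuous_const.min continuous_id)
  -- entrywise continuity of the clamped Γ
  have hΓc : ∀ i j, Continuous fun t => Γ (cl t) i j := by
    intro i j
    exact (hΓ i j).comp_continuous hclcont fun t => hJ' (hclmem t)
  -- bound
  obtain ⟨C₀, hC₀⟩ := (isCompact_Icc (a := A) (b := B)).exists_bound_of_continuousOn
    (f := fun t => (fun i j => Γ t i j : Fin n → Fin n → ℝ))
    (by
      apply continuousOn_pi.2
      intro i
      apply continuousOn_pi.2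
      intro j
      exact hΓ i j |>.mono hJ')
  set C : ℝ := max C₀ 0 with hC
  have hCnonneg : 0 ≤ C := le_max_right _ _
  have hbnd : ∀ t i j, |Γ (cl t) i j| ≤ C := by
    intro t i j
    have h1 := hC₀ (cl t) (hclmem t)
    have h2 : |Γ (cl t) i j| ≤ ‖(fun i j => Γ (cl t) i j : Fin n → Fin n → ℝ)‖ :=
      pi2_entry_le _ i j
    calc |Γ (cl t) i j| ≤ _ := h2
      _ ≤ C₀ := h1
      _ ≤ C := le_max_left _ _
  set v : ℝ → (Fin n → Fin n → ℝ) → (Fin n → Fin n → ℝ) :=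
    fun t x => fun i j => ∑ k, x i k * Γ (cl t) k j with hv
  have hsub : ∀ t x y, v t x - v t y = v t (x - y) := by
    intro t x y
    funext i j
    simp only [hv, Pi.sub_apply]
    rw [← Finset.sum_sub_distrib]
    congr 1
    funext k
    ring
  have hnorm : ∀ t x, ‖v t x‖ ≤ (n * C + 1) * ‖x‖ := by
    intro t x
    refine pi2_norm_le (by positivity) fun i j => ?_
    calc |v t x i j| = |∑ k, x i k * Γ (cl t) k j| := rfl
      _ ≤ ∑ k, |x i k * Γ (cl t) k j| := Finset.abs_sum_le_sum_abs _ _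
      _ ≤ ∑ _k : Fin n, ‖x‖ * C := by
          refine Finset.sum_le_sum fun k _ => ?_
          rw [abs_mul]
          exact mul_le_mul (pi2_entry_le x i k) (hbnd t k j) (abs_nonneg _) (norm_nonneg _)
      _ = n * C * ‖x‖ := by rw [Finset.sum_const]; simp [mul_comm, mul_assoc, mul_left_comm]
      _ ≤ (n * C + 1) * ‖x‖ := by nlinarith [norm_nonneg x]
  set K : ℝ≥0 := ⟨n * C + 1, by positivity⟩ with hK
  have hKcoe : (K : ℝ) = n * C + 1 := rfl
  refine ⟨v, K, ?_, ?_, ?_, ?_, ?_⟩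
  · rw [hKcoe]; nlinarith [hCnonneg, Nat.cast_nonneg (α := ℝ) n]
  · intro t
    refine LipschitzWith.of_dist_le_mul fun x y => ?_
    rw [dist_eq_norm, dist_eq_norm, hsub, hKcoe]
    exact hnorm t (x - y)
  · intro x
    apply continuous_pi
    intro i
    apply continuous_pi
    intro j
    exact continuous_finset_sum _ fun k _ => continuous_const.mul (hΓc k j)
  · intro t
    funext i j
    simp [hv]
  · intro u hu x
    funext i j
    simp only [hv]
    rw [hclid u hu]
end MatHelpers
section DetHelpers
open Matrix
variable {n : ℕ}

lemma detDiff {M : ℝ → Matrix (Fin n) (Fin n) ℝ} {a : ℝ}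
    (hM : ∀ i j, DifferentiableAt ℝ (fun u => M u i j) a) :
    DifferentiableAt ℝ (fun u => (M u).det) a := by
  have : (fun u => (M u).det) =
      fun u => ∑ σ : Equiv.Perm (Fin n), (Equiv.Perm.sign σ : ℝ) * ∏ i, M u (σ i) i := by
    funext u
    rw [Matrix.det_apply']
  rw [this]
  refine DifferentiableAt.fun_sum fun σ _ => ?_
  exact (DifferentiableAt.fun_finsetProd fun i _ => hM (σ i) i).const_mul _

lemma invEntryDiff {M : ℝ → Matrix (Fin n) (Fin n) ℝ} {a : ℝ}
    (hM : ∀ i j, DifferentiableAt ℝ (fun u => M u i j) a)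
    (hdet : (M a).det ≠ 0) (i j : Fin n) :
    DifferentiableAt ℝ (fun u => (M u)⁻¹ i j) a := by
  classical
  have hform : ∀ u, (M u)⁻¹ i j = ((M u).det)⁻¹ * (M u).adjugate i j := by
    intro u
    rw [Matrix.inv_def, Matrix.smul_apply, Ring.inverse_eq_inv', smul_eq_mul]
  have h1 : (fun u => (M u)⁻¹ i j) = fun u => ((M u).det)⁻¹ * (M u).adjugate i j := by
    funext u; exact hform u
  rw [h1]
  have hadj : DifferentiableAt ℝ (fun u => (M u).adjugate i j) a := by
    have h2 : (fun u => (M u).adjugate i j) =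
        fun u => ((M u).updateRow j (Pi.single i 1)).det := by
      funext u
      rw [Matrix.adjugate_apply]
    rw [h2]
    refine detDiff fun p q => ?_
    rcases eq_or_ne p j with hp | hp
    · subst hp
      simp only [Matrix.updateRow_self]
      exact differentiableAt_const _
    · simp only [Matrix.updateRow_ne hp]
      exact hM p q
  exact ((detDiff hM).inv hdet).mul hadj
end DetHelpers
section Core
open Matrix
variable {n : ℕ}

/-- Right-multiplication vector field `x ↦ x * Γ u`. -/
def mulG (Γ : ℝ → Matrix (Fin n) (Fin n) ℝ) (u : ℝ) (x : Fin n → Fin n → ℝ) :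
    Fin n → Fin n → ℝ := fun i j => ∑ k, x i k * Γ u k j

lemma mulG_eq (Γ : ℝ → Matrix (Fin n) (Fin n) ℝ) (u : ℝ) (x : Matrix (Fin n) (Fin n) ℝ) :
    mulG Γ u x = x * Γ u := by
  funext i j
  rw [Matrix.mul_apply]
  rfl

lemma sol_unique (Γ : ℝ → Matrix (Fin n) (Fin n) ℝ) {J : Set ℝ} (hJ : IsOpen J)
    (hJc : IsPreconnected J) (hΓ : ∀ i j, ContinuousOn (fun s => Γ s i j) J)
    {f g : ℝ → (Fin n → Fin n → ℝ)} {s : ℝ} (hs : s ∈ J)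
    (hf : ∀ t ∈ J, HasDerivAt f (mulG Γ t (f t)) t)
    (hg : ∀ t ∈ J, HasDerivAt g (mulG Γ t (g t)) t)
    (hfg : f s = g s) {t : ℝ} (ht : t ∈ J) : f t = g t := by
  have hord : Set.OrdConnected J := hJc.ordConnected
  have hIcc : Set.Icc (min s t) (max s t) ⊆ J := by
    have := hord.uIcc_subset hs ht
    simpa [Set.uIcc] using this
  obtain ⟨ε, hε, hBig⟩ := enlarge_Icc hJ min_le_max hIcc
  set A := min s t - ε with hA
  set B := max s t + ε with hB
  obtain ⟨v, K, hK1, hlip, hcont, h0, hmatch⟩ :=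
    clamped_field Γ hΓ (by have := min_le_max (a := s) (b := t); linarith) hBig
  have hv : ∀ u : ℝ, LipschitzOnWith K (v u) (Set.univ : Set (Fin n → Fin n → ℝ)) :=
    fun u => (hlip u).lipschitzOnWith
  have hIccJ : Set.Icc A B ⊆ J := hBig
  have key : ∀ (F : ℝ → (Fin n → Fin n → ℝ)),
      (∀ u ∈ J, HasDerivAt F (mulG Γ u (F u)) u) →
      ∀ x ∈ Set.Ioo A B, HasDerivAt F (v x (F x)) x ∧ F x ∈ Set.univ := by
    intro F hF x hx
    refine ⟨?_, Set.mem_univ _⟩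
    have hxI : x ∈ Set.Icc A B := Set.Ioo_subset_Icc_self hx
    rw [hmatch x hxI]
    exact hF x (hIccJ hxI)
  have hsmem : s ∈ Set.Ioo A B := ⟨by have := min_le_left s t; simp only [hA]; linarith,
    by have := le_max_left s t; simp only [hB]; linarith⟩
  have htmem : t ∈ Set.Ioo A B := ⟨by have := min_le_right s t; simp only [hA]; linarith,
    by have := le_max_right s t; simp only [hB]; linarith⟩
  exact ODE_solution_unique_of_mem_Ioo (fun t _ => hv t) hsmem (key f hf) (key g hg) hfg htmem

lemma sol_exists (Γ : ℝ → Matrix (Fin n) (Fin n) ℝ) {J : Set ℝ} (hJ : IsOpen J)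
    (hJc : IsPreconnected J) (hΓ : ∀ i j, ContinuousOn (fun s => Γ s i j) J)
    {s : ℝ} (hs : s ∈ J) :
    ∃ f : ℝ → (Fin n → Fin n → ℝ), f s = (1 : Matrix (Fin n) (Fin n) ℝ) ∧
      ∀ t ∈ J, HasDerivAt f (mulG Γ t (f t)) t := by
  classical
  have hord : Set.OrdConnected J := hJc.ordConnected
  have hIccJ : ∀ t ∈ J, Set.Icc (min s t) (max s t) ⊆ J := by
    intro t ht
    have := hord.uIcc_subset hs ht
    simpa [Set.uIcc] using this
  set one : Fin n → Fin n → ℝ := (1 : Matrix (Fin n) (Fin n) ℝ) with hone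
  set Q : ℝ → (ℝ → (Fin n → Fin n → ℝ)) → Prop := fun t g =>
    g s = one ∧ ∀ u ∈ Set.Icc (min s t) (max s t),
      HasDerivWithinAt g (mulG Γ u (g u)) (Set.Icc (min s t) (max s t)) u with hQdef
  have hQ : ∀ t ∈ J, ∃ g, Q t g := by
    intro t ht
    obtain ⟨v, K, hK1, hlip, hcont, h0, hmatch⟩ := clamped_field Γ hΓ min_le_max (hIccJ t ht)
    obtain ⟨g, hg0, hgd⟩ := aroundODE hK1 hlip hcont h0
      (⟨min_le_left s t, le_max_left s t⟩ : s ∈ Set.Icc (min s t) (max s t)) one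
    refine ⟨g, hg0, fun u hu => ?_⟩
    have := hgd u hu
    rw [hmatch u hu (g u)] at this
    exact this
  set sol : ℝ → ℝ → (Fin n → Fin n → ℝ) := fun t =>
    if h : ∃ g, Q t g then h.choose else fun _ => one with hsol
  set f : ℝ → (Fin n → Fin n → ℝ) := fun t => sol t t with hfdef
  have hsolspec : ∀ t ∈ J, Q t (sol t) := by
    intro t ht
    have h := hQ t ht
    simp only [hsol, dif_pos h]
    exact h.choose_spec
  have hf0 : f s = one := by
    have := (hsolspec s hs).1
    simpa [hfdef] using this
  refine ⟨f, hf0, ?_⟩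
  intro t ht
  obtain ⟨ε, hε, hBig⟩ := enlarge_Icc hJ min_le_max (hIccJ t ht)
  set A := min s t - ε with hA
  set B := max s t + ε with hB
  have hABle : A ≤ B := by have := min_le_max (a := s) (b := t); simp only [hA, hB]; linarith
  obtain ⟨v, K, hK1, hlip, hcont, h0, hmatch⟩ := clamped_field Γ hΓ hABle hBig
  have hsAB : s ∈ Set.Icc A B := ⟨by have := min_le_left s t; simp only [hA]; linarith,
    by have := le_max_left s t; simp only [hB]; linarith⟩
  obtain ⟨g, hg0, hgd⟩ := aroundODE hK1 hlip hcont h0 hsAB one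
  have claim : ∀ u ∈ Set.Icc A B, f u = g u := by
    intro u hu
    have huJ : u ∈ J := hBig hu
    obtain ⟨hg₁0, hg₁d⟩ := hsolspec u huJ
    have hfu : f u = sol u u := rfl
    have hsub : Set.Icc (min s u) (max s u) ⊆ Set.Icc A B :=
      Set.Icc_subset_Icc (le_min hsAB.1 hu.1) (max_le hsAB.2 hu.2)
    have hd₁ : ∀ x ∈ Set.Icc (min s u) (max s u),
        HasDerivWithinAt (sol u) (v x (sol u x)) (Set.Icc (min s u) (max s u)) x := by
      intro x hx
      rw [hmatch x (hsub hx)]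
      exact hg₁d x hx
    have hd₂ : ∀ x ∈ Set.Icc (min s u) (max s u),
        HasDerivWithinAt g (v x (g x)) (Set.Icc (min s u) (max s u)) x := by
      intro x hx
      rw [hmatch x (hsub hx)]
      have := hgd x (hsub hx)
      rw [hmatch x (hsub hx)] at this
      exact this.mono hsub
    rcases le_total s u with h | h
    · rw [min_eq_left h, max_eq_right h] at hd₁ hd₂
      have := uniqODE_right hlip hd₁ hd₂ (by rw [hg₁0, hg0]) u ⟨h, le_rfl⟩
      rw [hfu, this]
    · rw [min_eq_right h, max_eq_left h] at hd₁ hd₂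
      have := uniqODE_left hlip hd₁ hd₂ (by rw [hg₁0, hg0]) u ⟨le_rfl, h⟩
      rw [hfu, this]
  have htAB : t ∈ Set.Icc A B := ⟨by have := min_le_right s t; simp only [hA]; linarith,
    by have := le_max_right s t; simp only [hB]; linarith⟩
  have hnhds : Set.Icc A B ∈ nhds t := by
    refine Icc_mem_nhds ?_ ?_
    · have := min_le_right s t; simp only [hA]; linarith
    · have := le_max_right s t; simp only [hB]; linarith
  have hgt := (hgd t htAB).hasDerivAt hnhds
  have heve : f =ᶠ[nhds t] g := by
    filter_upwards [hnhds] with y hy using claim y hy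
  have hft : HasDerivAt f (v t (g t)) t := hgt.congr_of_eventuallyEq heve
  rw [hmatch t htAB (g t)] at hft
  rw [claim t htAB]
  exact hft
end Core

/-- Given continuous `Γ : J → M_n(ℝ)`, there is exactly one two-parameter family
`H : J × J → GL(n,ℝ)`, differentiable in each argument, with
`H t r = H t s * H s r`, `H s s = 1` and `∂H(s,t)/∂t|_{t=s} = Γ s`.
(Uniqueness is uniqueness of the values `H t s` for `s, t ∈ J`.) -/
theorem stmt_11 (n : ℕ) (J : Set ℝ) (hJ : IsOpen J) (hJc : IsPreconnected J)
    (Γ : ℝ → Matrix (Fin n) (Fin n) ℝ)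
    (hΓ : ∀ i j, ContinuousOn (fun s => Γ s i j) J) :
    ∃ H : ℝ → ℝ → Matrix (Fin n) (Fin n) ℝ,
      ((∀ s ∈ J, ∀ t ∈ J, IsUnit (H t s)) ∧
       (∀ a ∈ J, ∀ b ∈ J, ∀ i j, DifferentiableAt ℝ (fun u => H u b i j) a ∧
          DifferentiableAt ℝ (fun u => H a u i j) b) ∧
       (∀ r ∈ J, ∀ s ∈ J, ∀ t ∈ J, H t r = H t s * H s r) ∧
       (∀ s ∈ J, H s s = 1) ∧
       (∀ s ∈ J, ∀ i j, HasDerivAt (fun t => H s t i j) (Γ s i j) s)) ∧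
      ∀ H' : ℝ → ℝ → Matrix (Fin n) (Fin n) ℝ,
        ((∀ s ∈ J, ∀ t ∈ J, IsUnit (H' t s)) ∧
         (∀ a ∈ J, ∀ b ∈ J, ∀ i j, DifferentiableAt ℝ (fun u => H' u b i j) a ∧
            DifferentiableAt ℝ (fun u => H' a u i j) b) ∧
         (∀ r ∈ J, ∀ s ∈ J, ∀ t ∈ J, H' t r = H' t s * H' s r) ∧
         (∀ s ∈ J, H' s s = 1) ∧
         (∀ s ∈ J, ∀ i j, HasDerivAt (fun t => H' s t i j) (Γ s i j) s)) →
        ∀ s ∈ J, ∀ t ∈ J, H' t s = H t s := by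
  classical
  have hSol := fun (s : ℝ) (hs : s ∈ J) => sol_exists Γ hJ hJc hΓ hs
  set G : ℝ → ℝ → Matrix (Fin n) (Fin n) ℝ := fun s =>
    if h : s ∈ J then (hSol s h).choose else fun _ => 1 with hGdef
  have hGeq : ∀ s (hs : s ∈ J), G s = (hSol s hs).choose := by
    intro s hs
    simp only [hGdef]
    exact dif_pos hs
  have hG1 : ∀ s ∈ J, G s s = 1 := by
    intro s hs
    rw [hGeq s hs]
    exact (hSol s hs).choose_spec.1
  have hGd : ∀ s ∈ J, ∀ t ∈ J, ∀ i j,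
      HasDerivAt (fun u => G s u i j) ((mulG Γ t (G s t)) i j) t := by
    intro s hs t ht i j
    have h2 := (hSol s hs).choose_spec.2 t ht
    have h3 := hasDerivAt_pi2.mp h2 i j
    rw [hGeq s hs]
    exact h3
  -- cocycle property
  have hCo : ∀ r ∈ J, ∀ s ∈ J, ∀ t ∈ J, G t r = G t s * G s r := by
    intro r hr s hs t ht
    have := sol_unique Γ hJ hJc hΓ hs
      (f := fun x : ℝ => (G t x : Fin n → Fin n → ℝ))
      (g := fun x : ℝ => ((G t s * G s x : Matrix (Fin n) (Fin n) ℝ) : Fin n → Fin n → ℝ))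
      (fun u hu => hasDerivAt_pi2.mpr (hGd t ht u hu))
      (fun u hu => by
        refine hasDerivAt_pi2.mpr fun i j => ?_
        have hent : (fun x => (G t s * G s x) i j) =
            fun x => ∑ k, G t s i k * G s x k j := by
          funext x
          rw [Matrix.mul_apply]
        have hsum : HasDerivAt (fun x => ∑ k, G t s i k * G s x k j)
            (∑ k, G t s i k * (mulG Γ u (G s u)) k j) u :=
          HasDerivAt.fun_sum fun k _ => HasDerivAt.const_mul (G t s i k) (hGd s hs u hu k j)
        have hval : ∑ k, G t s i k * (mulG Γ u (G s u)) k j =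
            (mulG Γ u (G t s * G s u)) i j := by
          rw [mulG_eq, mulG_eq, ← Matrix.mul_apply, ← Matrix.mul_assoc]
        show HasDerivAt (fun x => (G t s * G s x) i j)
          ((mulG Γ u (G t s * G s u)) i j) u
        rw [hent, ← hval]
        exact hsum)
      (by
        show (G t s : Fin n → Fin n → ℝ) = (G t s * G s s : Matrix (Fin n) (Fin n) ℝ)
        rw [hG1 s hs, Matrix.mul_one]) hr
    exact this
  -- inverse relation
  have hInv : ∀ s ∈ J, ∀ t ∈ J, G t s * G s t = 1 := by
    intro s hs t ht
    have := hCo t ht s hs t ht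
    rw [← this, hG1 t ht]
  refine ⟨G, ⟨?_, ?_, hCo, hG1, ?_⟩, ?_⟩
  · -- units
    intro s hs t ht
    exact ⟨⟨G t s, G s t, hInv s hs t ht, hInv t ht s hs⟩, rfl⟩
  · -- differentiability in each variable
    intro a ha b hb i j
    constructor
    · -- first variable
      have hone : ∀ u ∈ J, G b u * G u b = 1 := fun u hu => hInv u hu b hb
      have hrel : ∀ u ∈ J, G u b = (G b u)⁻¹ := by
        intro u hu
        exact (Matrix.inv_eq_right_inv (hone u hu)).symm
      have hdet : (G b a).det ≠ 0 := by
        have h1 : (G b a).det * (G a b).det = 1 := by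
          rw [← Matrix.det_mul, hone a ha, Matrix.det_one]
        exact left_ne_zero_of_mul_eq_one h1
      have hEnt : ∀ i j, DifferentiableAt ℝ (fun u => G b u i j) a :=
        fun i j => (hGd b hb a ha i j).differentiableAt
      have hinv : DifferentiableAt ℝ (fun u => (G b u)⁻¹ i j) a :=
        invEntryDiff hEnt hdet i j
      have heve : (fun u => G u b i j) =ᶠ[nhds a] (fun u => (G b u)⁻¹ i j) := by
        filter_upwards [hJ.mem_nhds ha] with y hy
        rw [hrel y hy]
      exact (Filter.EventuallyEq.differentiableAt_iff heve).mpr hinv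
    · exact (hGd a ha b hb i j).differentiableAt
  · -- derivative on the diagonal
    intro s hs i j
    have hval : mulG Γ s (G s s) = Γ s := by
      rw [mulG_eq, hG1 s hs, Matrix.one_mul]
    have := hGd s hs s hs i j
    rw [hval] at this
    exact this
  · -- uniqueness
    rintro H' ⟨hU', hD', hC', hO', hDer'⟩ s hs t ht
    have := sol_unique Γ hJ hJc hΓ ht
      (f := fun x : ℝ => (H' t x : Fin n → Fin n → ℝ))
      (g := fun x : ℝ => (G t x : Fin n → Fin n → ℝ))
      (fun x hx => by
        refine hasDerivAt_pi2.mpr fun i j => ?_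
        have hφ : HasDerivAt (fun u => ∑ k, H' t x i k * H' x u k j)
            (∑ k, H' t x i k * Γ x k j) x :=
          HasDerivAt.fun_sum fun k _ => HasDerivAt.const_mul (H' t x i k) (hDer' x hx k j)
        have hval : ∑ k, H' t x i k * Γ x k j = (mulG Γ x (H' t x)) i j := by
          rw [mulG_eq, ← Matrix.mul_apply]
        have heve : (fun u => H' t u i j) =ᶠ[nhds x]
            (fun u => ∑ k, H' t x i k * H' x u k j) := by
          filter_upwards [hJ.mem_nhds hx] with y hy
          rw [hC' y hy x hx t ht, Matrix.mul_apply]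
        show HasDerivAt (fun u => H' t u i j) ((mulG Γ x (H' t x)) i j) x
        rw [← hval]
        exact hφ.congr_of_eventuallyEq heve)
      (fun x hx => hasDerivAt_pi2.mpr (hGd t ht x hx))
      (by
        show (H' t t : Fin n → Fin n → ℝ) = (G t t : Fin n → Fin n → ℝ)
        rw [hO' t ht, hG1 t ht]) hs
    exact this
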